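/- Define U(q₁,q₂) = ½(q₁² + q₂²) + q₁²q₂ + ⅓q₂³ and Ũ(q₁,q₂) = q₁q₂ + ⅓q₁³ + q₁q₂², and the Lagrangians L(t,q,v) = ½(v₁² + v₂²) − U(q₁,q₂) and L̃(t,q,v) = v₁v₂ − Ũ(q₁,q₂). Then there exists no differentiable function G : ℝ × ℝ² → ℝ such that L̃(t,q,v) = L(t,q,v) + ∂G/∂t(t,q) + ∂G/∂q₁(t,q)·v₁ + ∂G/∂q₂(t,q)·v₂ for all (t,q,v) ∈ ℝ × ℝ² × ℝ². -/
import Mathlib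


/-- The Sawada–Kotera Lagrangian `L(t,q,v) = ½(v₁²+v₂²) − U(q)` and the
alternative Lagrangian `L̃(t,q,v) = v₁v₂ − Ũ(q)` are not related by a gauge
transform: there is no differentiable `G(t,q)` with
`L̃ = L + ∂G/∂t + ∂G/∂q₁·v₁ + ∂G/∂q₂·v₂`. -/
theorem stmt_12 :
    ¬ ∃ G : ℝ × (ℝ × ℝ) → ℝ, Differentiable ℝ G ∧
      ∀ t q₁ q₂ v₁ v₂ : ℝ,
        v₁ * v₂ - (q₁ * q₂ + (1 / 3) * q₁ ^ 3 + q₁ * q₂ ^ 2)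
          = ((1 / 2) * (v₁ ^ 2 + v₂ ^ 2)
              - ((1 / 2) * (q₁ ^ 2 + q₂ ^ 2) + q₁ ^ 2 * q₂ + (1 / 3) * q₂ ^ 3))
            + deriv (fun s => G (s, (q₁, q₂))) t
            + deriv (fun s => G (t, (s, q₂))) q₁ * v₁
            + deriv (fun s => G (t, (q₁, s))) q₂ * v₂ := by
  rintro ⟨G, -, h⟩
  have h0 := h 0 0 0 0 0
  have h1 := h 0 0 0 1 0
  have h2 := h 0 0 0 (-1) 0
  norm_num at h0 h1 h2
  linarith
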